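/- Assume (p₀), (V_α), (G_β). Then there is a constant C such that for all x ∈ G, R ≥ 1 and all y, y' ∈ B(x,R), the vertices y and y' are connected by a nearest-neighbor path inside B(x, C·R). In fact one may take C = 2C₃ + 1 where C₃ is the constant from the killed-Green-function estimate. -/

import Mathlib

open scoped ENNReal

open Classical in
noncomputable def nstep {V : Type*} (p : V → V → ℝ) : ℕ → V → V → ℝ
  | 0, x, y => if x = y then 1 else 0
  | n + 1, x, y => ∑' z, nstep p n x z * p z y

noncomputable def green {V : Type*} (p : V → V → ℝ) (lam : V → ℝ) (x y : V) : ℝ :=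
  (1 / lam y) * ∑' n, nstep p n x y

open Classical in
noncomputable def killedKernel {V : Type*} (p : V → V → ℝ) (U : Set V) (x y : V) : ℝ :=
  if x ∈ U ∧ y ∈ U then p x y else 0

noncomputable def killedGreen {V : Type*} (p : V → V → ℝ) (lam : V → ℝ) (U : Set V) (x y : V) : ℝ :=
  (1 / lam y) * ∑' n, nstep (killedKernel p U) n x y

open Classical in
noncomputable def hitProb {V : Type*} (p : V → V → ℝ) (A : Set V) (x : V) : ℝ :=
  ∑' n : ℕ, ∑' y : V, if y ∈ A then nstep (fun a b => if a ∈ A then 0 else p a b) n x y else 0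

open Classical in
noncomputable def eqMeasure {V : Type*} (p : V → V → ℝ) (lam : V → ℝ) (A : Set V) (x : V) : ℝ :=
  if x ∈ A then lam x * (1 - ∑' y, p x y * hitProb p A y) else 0

noncomputable def capaE {V : Type*} (p : V → V → ℝ) (lam : V → ℝ) (A : Set V) : ℝ≥0∞ :=
  ∑' x : V, Set.indicator A (fun v => ENNReal.ofReal (eqMeasure p lam A v)) x


open Classical in
noncomputable def NE {V : Type*} (P : V → V → ℝ≥0∞) : ℕ → V → V → ℝ≥0∞
  | 0, x, y => if x = y then 1 else 0
  | n + 1, x, y => ∑' z, NE P n x z * P z y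

lemma NE_zero_self {V : Type*} (P : V → V → ℝ≥0∞) (x : V) : NE P 0 x x = 1 := by
  simp [NE]

lemma NE_zero_ne {V : Type*} (P : V → V → ℝ≥0∞) {x y : V} (h : x ≠ y) : NE P 0 x y = 0 := by
  simp [NE, h]

lemma NE_succ {V : Type*} (P : V → V → ℝ≥0∞) (n : ℕ) (x y : V) :
    NE P (n + 1) x y = ∑' z, NE P n x z * P z y := rfl

lemma NE_zero_mul_tsum {V : Type*} (P : V → V → ℝ≥0∞) (x : V) (g : V → ℝ≥0∞) :
    ∑' z, NE P 0 x z * g z = g x := by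
  rw [tsum_eq_single x (fun b hb => by rw [NE_zero_ne P (Ne.symm hb), zero_mul])]
  rw [NE_zero_self, one_mul]

lemma NE_succ_left {V : Type*} (P : V → V → ℝ≥0∞) :
    ∀ (n : ℕ) (x y : V), NE P (n + 1) x y = ∑' z, P x z * NE P n z y := by
  intro n
  induction n with
  | zero =>
    intro x y
    rw [NE_succ, NE_zero_mul_tsum]
    rw [tsum_eq_single y (fun b hb => by rw [NE_zero_ne P hb, mul_zero])]
    rw [NE_zero_self, mul_one]
  | succ n ih =>
    intro x y
    rw [NE_succ]
    calc ∑' z, NE P (n+1) x z * P z y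
        = ∑' z, (∑' w, P x w * NE P n w z) * P z y := by
          exact tsum_congr fun z => by rw [ih]
      _ = ∑' z, ∑' w, P x w * NE P n w z * P z y := by
          exact tsum_congr fun z => ENNReal.tsum_mul_right.symm
      _ = ∑' w, ∑' z, P x w * NE P n w z * P z y := ENNReal.tsum_comm
      _ = ∑' w, P x w * NE P (n+1) w y := by
          refine tsum_congr fun w => ?_
          rw [NE_succ, ← ENNReal.tsum_mul_left]
          exact tsum_congr fun z => by rw [mul_assoc]

lemma NE_tsum_shift {V : Type*} (Q : V → V → ℝ≥0∞) (k : ℕ) (x : V) (h : V → V → ℝ≥0∞) :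
    ∑' z, Q x z * (∑' z', ∑' w, NE Q k z z' * h z' w)
      = ∑' z', ∑' w, NE Q (k+1) x z' * h z' w := by
  calc ∑' z, Q x z * (∑' z', ∑' w, NE Q k z z' * h z' w)
      = ∑' z, ∑' z', ∑' w, Q x z * (NE Q k z z' * h z' w) := by
        refine tsum_congr fun z => ?_
        rw [← ENNReal.tsum_mul_left]
        exact tsum_congr fun z' => (ENNReal.tsum_mul_left).symm
    _ = ∑' z', ∑' z, ∑' w, Q x z * (NE Q k z z' * h z' w) := ENNReal.tsum_comm
    _ = ∑' z', ∑' w, ∑' z, Q x z * (NE Q k z z' * h z' w) :=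
        tsum_congr fun z' => ENNReal.tsum_comm
    _ = ∑' z', ∑' w, NE Q (k+1) x z' * h z' w := by
        refine tsum_congr fun z' => tsum_congr fun w => ?_
        calc ∑' z, Q x z * (NE Q k z z' * h z' w)
            = ∑' z, (Q x z * NE Q k z z') * h z' w :=
              tsum_congr fun z => (mul_assoc _ _ _).symm
          _ = (∑' z, Q x z * NE Q k z z') * h z' w := ENNReal.tsum_mul_right
          _ = NE Q (k+1) x z' * h z' w := by rw [← NE_succ_left]

lemma NE_decomp {V : Type*} (P Q EK : V → V → ℝ≥0∞) (hQE : ∀ a b, Q a b + EK a b = P a b)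
    (y' : V) :
    ∀ (n : ℕ) (x : V), NE P n x y' ≤ NE Q n x y' +
      ∑ k ∈ Finset.range n, ∑' z, ∑' w, NE Q k x z * (EK z w * NE P (n - 1 - k) w y') := by
  intro n
  induction n with
  | zero =>
    intro x
    simp only [Finset.range_zero, Finset.sum_empty, add_zero]
    rcases eq_or_ne x y' with rfl | h
    · rw [NE_zero_self, NE_zero_self]
    · rw [NE_zero_ne P h, NE_zero_ne Q h]
  | succ n ih =>
    intro x
    have e1 : NE P (n+1) x y' = ∑' z, Q x z * NE P n z y' + ∑' z, EK x z * NE P n z y' := by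
      rw [NE_succ_left, ← ENNReal.tsum_add]
      exact tsum_congr fun z => by rw [← hQE, add_mul]
    have e2 : ∑' z, Q x z * NE P n z y' ≤ ∑' z, Q x z *
        (NE Q n z y' + ∑ k ∈ Finset.range n, ∑' z', ∑' w,
          NE Q k z z' * (EK z' w * NE P (n - 1 - k) w y')) :=
      ENNReal.tsum_le_tsum fun z => mul_le_mul_right (ih z) _
    have e3 : ∑' z, Q x z * (NE Q n z y' + ∑ k ∈ Finset.range n, ∑' z', ∑' w,
          NE Q k z z' * (EK z' w * NE P (n - 1 - k) w y'))
        = NE Q (n+1) x y' + ∑' z, Q x z * ∑ k ∈ Finset.range n, ∑' z', ∑' w,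
          NE Q k z z' * (EK z' w * NE P (n - 1 - k) w y') := by
      calc ∑' z, Q x z * (NE Q n z y' + ∑ k ∈ Finset.range n, ∑' z', ∑' w,
            NE Q k z z' * (EK z' w * NE P (n - 1 - k) w y'))
          = ∑' z, (Q x z * NE Q n z y' + Q x z * ∑ k ∈ Finset.range n, ∑' z', ∑' w,
            NE Q k z z' * (EK z' w * NE P (n - 1 - k) w y')) :=
            tsum_congr fun z => mul_add _ _ _
        _ = (∑' z, Q x z * NE Q n z y') + ∑' z, Q x z * ∑ k ∈ Finset.range n, ∑' z', ∑' w,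
            NE Q k z z' * (EK z' w * NE P (n - 1 - k) w y') := ENNReal.tsum_add
        _ = NE Q (n+1) x y' + ∑' z, Q x z * ∑ k ∈ Finset.range n, ∑' z', ∑' w,
            NE Q k z z' * (EK z' w * NE P (n - 1 - k) w y') := by rw [← NE_succ_left]
    have e4 : ∑' z, Q x z * ∑ k ∈ Finset.range n, ∑' z', ∑' w,
          NE Q k z z' * (EK z' w * NE P (n - 1 - k) w y')
        = ∑ k ∈ Finset.range n, ∑' z', ∑' w,
          NE Q (k+1) x z' * (EK z' w * NE P (n - 1 - k) w y') := by
      calc ∑' z, Q x z * ∑ k ∈ Finset.range n, ∑' z', ∑' w,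
            NE Q k z z' * (EK z' w * NE P (n - 1 - k) w y')
          = ∑' z, ∑ k ∈ Finset.range n, Q x z * ∑' z', ∑' w,
            NE Q k z z' * (EK z' w * NE P (n - 1 - k) w y') :=
            tsum_congr fun z => Finset.mul_sum _ _ _
        _ = ∑ k ∈ Finset.range n, ∑' z, Q x z * ∑' z', ∑' w,
            NE Q k z z' * (EK z' w * NE P (n - 1 - k) w y') :=
            Summable.tsum_finsetSum (fun i _ => ENNReal.summable)
        _ = ∑ k ∈ Finset.range n, ∑' z', ∑' w,
            NE Q (k+1) x z' * (EK z' w * NE P (n - 1 - k) w y') :=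
            Finset.sum_congr rfl fun k _ => NE_tsum_shift Q k x _
    have e5 : ∑' z, EK x z * NE P n z y'
        = ∑' z, ∑' w, NE Q 0 x z * (EK z w * NE P n w y') := by
      symm
      calc ∑' z, ∑' w, NE Q 0 x z * (EK z w * NE P n w y')
          = ∑' z, NE Q 0 x z * ∑' w, (EK z w * NE P n w y') :=
            tsum_congr fun z => ENNReal.tsum_mul_left
        _ = ∑' w, EK x w * NE P n w y' := NE_zero_mul_tsum Q x _
    have etar : ∑ k ∈ Finset.range (n+1), ∑' z, ∑' w,
          NE Q k x z * (EK z w * NE P (n + 1 - 1 - k) w y')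
        = (∑ k ∈ Finset.range n, ∑' z', ∑' w,
            NE Q (k+1) x z' * (EK z' w * NE P (n - 1 - k) w y'))
          + ∑' z, ∑' w, NE Q 0 x z * (EK z w * NE P n w y') := by
      have h1 : ∀ k, n + 1 - 1 - (k + 1) = n - 1 - k := fun k => by omega
      have h2 : n + 1 - 1 - 0 = n := by omega
      rw [Finset.sum_range_succ']
      simp only [h1, h2]
    calc NE P (n+1) x y'
        = ∑' z, Q x z * NE P n z y' + ∑' z, EK x z * NE P n z y' := e1
      _ ≤ (NE Q (n+1) x y' + ∑' z, Q x z * ∑ k ∈ Finset.range n, ∑' z', ∑' w,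
            NE Q k z z' * (EK z' w * NE P (n - 1 - k) w y')) + ∑' z, EK x z * NE P n z y' := by
          rw [← e3]; exact add_le_add_left (e2.trans_eq rfl) _
      _ = NE Q (n+1) x y' + ∑ k ∈ Finset.range (n+1), ∑' z, ∑' w,
            NE Q k x z * (EK z w * NE P (n + 1 - 1 - k) w y') := by
          rw [e4, e5, etar, add_assoc]

lemma nstep_facts {V : Type*} (p : V → V → ℝ) (hp0 : ∀ a b, 0 ≤ p a b)
    (hfin : ∀ a, {b | p a b ≠ 0}.Finite) (n : ℕ) :
    (∀ x, {y | nstep p n x y ≠ 0}.Finite) ∧ (∀ x y, 0 ≤ nstep p n x y) ∧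
      (∀ x y, NE (fun a b => ENNReal.ofReal (p a b)) n x y = ENNReal.ofReal (nstep p n x y)) := by
  induction n with
  | zero =>
    refine ⟨fun x => Set.Finite.subset (Set.finite_singleton x) ?_, fun x y => ?_, fun x y => ?_⟩
    · intro y hy
      simp only [nstep, Set.mem_setOf_eq, ne_eq, ite_eq_right_iff, not_forall] at hy
      simp [hy.1.symm]
    · simp only [nstep]; split <;> norm_num
    · simp only [nstep, NE]; split <;> simp
  | succ n ih =>
    obtain ⟨hfin', hnn, heq⟩ := ih
    have hsum : ∀ x y, Summable (fun z => nstep p n x z * p z y) := by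
      intro x y
      refine summable_of_ne_finset_zero (s := (hfin' x).toFinset) (fun z hz => ?_)
      have : nstep p n x z = 0 := by simpa using hz
      rw [this, zero_mul]
    refine ⟨fun x => ?_, fun x y => ?_, fun x y => ?_⟩
    · refine Set.Finite.subset (Set.Finite.biUnion (hfin' x) (fun z _ => hfin z)) ?_
      intro y hy
      simp only [Set.mem_setOf_eq, nstep] at hy
      by_contra hmem
      apply hy
      have hz : ∀ z, nstep p n x z * p z y = 0 := by
        intro z
        by_cases h1 : nstep p n x z = 0
        · rw [h1, zero_mul]
        by_cases h2 : p z y = 0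
        · rw [h2, mul_zero]
        exact absurd (Set.mem_biUnion (show z ∈ {y | nstep p n x y ≠ 0} from h1) h2) hmem
      simp only [hz, tsum_zero]
    · exact tsum_nonneg fun z => mul_nonneg (hnn x z) (hp0 z y)
    · rw [NE_succ]
      calc ∑' z, NE (fun a b => ENNReal.ofReal (p a b)) n x z * ENNReal.ofReal (p z y)
          = ∑' z, ENNReal.ofReal (nstep p n x z * p z y) := by
            exact tsum_congr fun z => by rw [heq, ← ENNReal.ofReal_mul (hnn x z)]
        _ = ENNReal.ofReal (∑' z, nstep p n x z * p z y) :=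
            (ENNReal.ofReal_tsum_of_nonneg (fun z => mul_nonneg (hnn x z) (hp0 z y)) (hsum x y)).symm
        _ = ENNReal.ofReal (nstep p (n+1) x y) := by rw [nstep]

lemma tsum_range_reindex {F : ℕ → ℕ → ℝ≥0∞} :
    ∑' n : ℕ, ∑ k ∈ Finset.range n, F k (n - 1 - k) = ∑' k : ℕ, ∑' m : ℕ, F k m := by
  have h1 : ∀ n : ℕ, ∑ k ∈ Finset.range n, F k (n - 1 - k)
      = ∑' k : ℕ, if k < n then F k (n - 1 - k) else 0 := by
    intro n
    rw [tsum_eq_sum (s := Finset.range n) (fun k hk => if_neg (by simpa using hk))]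
    exact Finset.sum_congr rfl fun k hk => (if_pos (Finset.mem_range.mp hk)).symm
  calc ∑' n : ℕ, ∑ k ∈ Finset.range n, F k (n - 1 - k)
      = ∑' n : ℕ, ∑' k : ℕ, if k < n then F k (n - 1 - k) else 0 := tsum_congr h1
    _ = ∑' k : ℕ, ∑' n : ℕ, if k < n then F k (n - 1 - k) else 0 := ENNReal.tsum_comm
    _ = ∑' k : ℕ, ∑' m : ℕ, F k m := by
        refine tsum_congr fun k => ?_
        have hinj : Function.Injective (fun m : ℕ => k + 1 + m) := fun a b h => by simpa using h
        have hsupp : Function.support (fun n : ℕ => if k < n then F k (n - 1 - k) else 0)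
            ⊆ Set.range (fun m : ℕ => k + 1 + m) := by
          intro n hn
          simp only [Function.mem_support, ne_eq, ite_eq_right_iff, not_forall] at hn
          obtain ⟨hkn, -⟩ := hn
          exact ⟨n - k - 1, show k + 1 + (n - k - 1) = n by omega⟩
        rw [← hinj.tsum_eq hsupp]
        refine tsum_congr fun m => ?_
        show (if k < k + 1 + m then F k (k + 1 + m - 1 - k) else 0) = F k m
        rw [if_pos (by omega : k < k + 1 + m)]
        congr 1
        omega

/-- balls are almost connected: there is C such that any two points of B(x,R)
are joined by a nearest-neighbor path staying in B(x, C·R). -/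
theorem balls_almost_connected
    {V : Type*} (G : SimpleGraph V) [∀ v : V, Fintype (G.neighborSet v)] [Infinite V]
    (hconn : G.Connected)
    (w : V → V → ℝ) (lam : V → ℝ) (p : V → V → ℝ) (d : V → V → ℝ)
    (hw_symm : ∀ x y, w x y = w y x)
    (hw_nonneg : ∀ x y, 0 ≤ w x y)
    (hw_adj : ∀ x y, 0 < w x y ↔ G.Adj x y)
    (hlam : ∀ x, lam x = ∑ y ∈ G.neighborFinset x, w x y)
    (hp : ∀ x y, p x y = w x y / lam x)
    (htrans : ∀ x y, Summable (fun n => nstep p n x y))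
    (c₀ : ℝ) (hc₀ : 0 < c₀) (hp₀ : ∀ x y, G.Adj x y → c₀ ≤ p x y)
    (hd_symm : ∀ x y, d x y = d y x)
    (hd_self : ∀ x, d x x = 0)
    (hd_nonneg : ∀ x y, 0 ≤ d x y)
    (hd_tri : ∀ x y z, d x z ≤ d x y + d y z)
    (hBfin : ∀ (x : V) (L : ℝ), {y | d x y ≤ L}.Finite)
    (α β : ℝ) (hα : 2 < α) (hβ₂ : 2 ≤ β) (hβα : β < α)
    (cV CV : ℝ) (hcV : 0 < cV)
    (hVol : ∀ (x : V) (L : ℝ), 1 ≤ L →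
      cV * L ^ α ≤ ∑ y ∈ (hBfin x L).toFinset, lam y ∧
        ∑ y ∈ (hBfin x L).toFinset, lam y ≤ CV * L ^ α)
    (cg Cg : ℝ) (hcg : 0 < cg)
    (hGdiag : ∀ x : V, cg ≤ green p lam x x ∧ green p lam x x ≤ Cg)
    (hGoff : ∀ x y : V, x ≠ y →
      cg * d x y ^ (-(α - β)) ≤ green p lam x y ∧
        green p lam x y ≤ Cg * d x y ^ (-(α - β))) :
    ∃ C : ℝ, 0 < C ∧ ∀ (x : V) (R : ℝ), 1 ≤ R → ∀ y y' : V, d x y ≤ R → d x y' ≤ R →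
      ∃ wk : G.Walk y y', ∀ v ∈ wk.support, d x v ≤ C * R := by
  classical
  obtain ⟨x₀⟩ : Nonempty V := inferInstance
  have hCg : cg ≤ Cg := le_trans (hGdiag x₀).1 (hGdiag x₀).2
  have hCgpos : 0 < Cg := lt_of_lt_of_le hcg hCg
  set t : ℝ := α - β with ht_def
  have ht : 0 < t := sub_pos.mpr hβα
  set u : ℝ := (Cg / cg) ^ (1/t) with hu_def
  have hu1 : 1 ≤ u := Real.one_le_rpow ((one_le_div hcg).mpr hCg) (by positivity)
  refine ⟨2*u + 3, by linarith, ?_⟩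
  intro x R hR y y' hy hy'
  by_contra hcon
  set C : ℝ := 2*u + 3 with hC_def
  have hC1 : 1 < C := by simp only [hC_def]; linarith
  have hR0 : 0 < R := lt_of_lt_of_le one_pos hR
  -- basic facts about the weights and kernel
  have hlampos : ∀ z, 0 < lam z := by
    intro z
    have hnb : ∃ v, G.Adj z v := by
      obtain ⟨v, hv⟩ := exists_ne z
      obtain ⟨wk⟩ := hconn.preconnected z v
      cases wk with
      | nil => exact absurd rfl (Ne.symm hv)
      | cons h q => exact ⟨_, h⟩
    obtain ⟨v, hv⟩ := hnb
    rw [hlam]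
    exact Finset.sum_pos' (fun i _ => hw_nonneg z i)
      ⟨v, by simpa [SimpleGraph.mem_neighborFinset] using hv, (hw_adj z v).mpr hv⟩
  have hpnn : ∀ a b, 0 ≤ p a b := fun a b => by
    rw [hp]; exact div_nonneg (hw_nonneg a b) (hlampos a).le
  have hpadj : ∀ a b, p a b ≠ 0 → G.Adj a b := by
    intro a b h
    rw [hp] at h
    have hw : w a b ≠ 0 := fun h0 => h (by rw [h0, zero_div])
    exact (hw_adj a b).mp (lt_of_le_of_ne (hw_nonneg a b) (Ne.symm hw))
  have hpfin : ∀ a, {b | p a b ≠ 0}.Finite := fun a =>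
    Set.Finite.subset (G.neighborSet a).toFinite (fun b hb => hpadj a b hb)
  have hrowsum : ∀ z, ∑ b ∈ G.neighborFinset z, p z b = 1 := by
    intro z
    have : ∑ b ∈ G.neighborFinset z, p z b = (∑ b ∈ G.neighborFinset z, w z b) / lam z := by
      rw [Finset.sum_div]
      exact Finset.sum_congr rfl fun b _ => hp z b
    rw [this, ← hlam, div_self (hlampos z).ne']
  set P : V → V → ℝ≥0∞ := fun a b => ENNReal.ofReal (p a b) with hP_def
  have hNP : ∀ (n : ℕ) (a b : V), NE P n a b = ENNReal.ofReal (nstep p n a b) :=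
    fun n a b => (nstep_facts p hpnn hpfin n).2.2 a b
  have hnstepnn : ∀ (n : ℕ) (a b : V), 0 ≤ nstep p n a b :=
    fun n => (nstep_facts p hpnn hpfin n).2.1
  have hGE : ∀ v v' : V, ∑' n, NE P n v v' = ENNReal.ofReal (lam v' * green p lam v v') := by
    intro v v'
    have h1 : lam v' * green p lam v v' = ∑' n, nstep p n v v' := by
      rw [green, ← mul_assoc, mul_one_div, div_self (hlampos v').ne', one_mul]
    rw [h1, ENNReal.ofReal_tsum_of_nonneg (fun n => hnstepnn n v v') (htrans v v')]
    exact tsum_congr fun n => hNP n v v'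
  have hProw : ∀ z, ∑' b, P z b = 1 := by
    intro z
    have hsupp : ∀ b, b ∉ G.neighborFinset z → P z b = 0 := by
      intro b hb
      have hnadj : ¬ G.Adj z b := by simpa [SimpleGraph.mem_neighborFinset] using hb
      have hp0 : p z b = 0 := by
        by_contra h
        exact hnadj (hpadj z b h)
      simp [hP_def, hp0]
    rw [tsum_eq_sum hsupp, ← ENNReal.ofReal_sum_of_nonneg (fun i _ => hpnn z i), hrowsum z,
      ENNReal.ofReal_one]
  have hNEpos : ∀ (a b : V) (wk : G.Walk a b), 0 < NE P wk.length a b := by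
    intro a b wk
    induction wk with
    | nil => rw [SimpleGraph.Walk.length_nil, NE_zero_self]; exact zero_lt_one
    | @cons a c b h q ih =>
      rw [SimpleGraph.Walk.length_cons, NE_succ_left]
      have hPk : P a c ≠ 0 := by
        simp only [hP_def, ne_eq, ENNReal.ofReal_eq_zero, not_le]
        exact lt_of_lt_of_le hc₀ (hp₀ a c h)
      exact lt_of_lt_of_le (ENNReal.mul_pos hPk ih.ne') (ENNReal.le_tsum c)
  -- the connected cluster A
  set A : Set V := {v | ∃ wk : G.Walk y v, ∀ z ∈ wk.support, d x z ≤ C * R} with hA_def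
  have hyA : y ∈ A := by
    refine ⟨SimpleGraph.Walk.nil, ?_⟩
    intro z hz
    simp only [SimpleGraph.Walk.support_nil, List.mem_singleton] at hz
    subst hz
    nlinarith
  have hy'A : y' ∉ A := hcon
  have hyy' : y ≠ y' := fun h => hy'A (h ▸ hyA)
  have hdyy' : 0 < d y y' := by
    rcases lt_or_eq_of_le (hd_nonneg y y') with h | h
    · exact h
    exfalso
    have hgle : green p lam y y' ≤ 0 := by
      have h2 := (hGoff y y' hyy').2
      rw [← h, Real.zero_rpow (neg_ne_zero.mpr ht.ne')] at h2
      simpa using h2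
    have hgpos : 0 < green p lam y y' := by
      obtain ⟨wk⟩ := hconn.preconnected y y'
      have h1 : 0 < ∑' n, NE P n y y' :=
        lt_of_lt_of_le (hNEpos y y' wk) (ENNReal.le_tsum wk.length)
      rw [hGE y y'] at h1
      have h2 := ENNReal.ofReal_pos.mp h1
      nlinarith [hlampos y']
    linarith
  have hd2R : d y y' ≤ 2 * R := by
    have h1 := hd_tri y x y'
    rw [hd_symm y x] at h1
    linarith
  -- kernels killed on A
  set Q : V → V → ℝ≥0∞ := fun a b => if a ∈ A ∧ b ∈ A then P a b else 0 with hQ_def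
  set EK : V → V → ℝ≥0∞ := fun a b => if a ∈ A ∧ b ∈ A then 0 else P a b with hEK_def
  have hQE : ∀ a b, Q a b + EK a b = P a b := by
    intro a b
    simp only [hQ_def, hEK_def]
    split <;> simp
  have hAclosed : ∀ z ∈ A, ∀ v, G.Adj z v → d x v ≤ C * R → v ∈ A := by
    rintro z ⟨wk, hwk⟩ v hadj hdv
    refine ⟨wk.concat hadj, ?_⟩
    intro z' hz'
    rw [SimpleGraph.Walk.support_concat, List.mem_append] at hz'
    rcases hz' with hz' | hz'
    · exact hwk z' hz'
    · simp only [List.mem_singleton] at hz'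
      subst hz'
      exact hdv
  have hEKfar : ∀ z b, z ∈ A → EK z b ≠ 0 → C * R < d x b := by
    intro z b hz hE
    simp only [hEK_def] at hE
    by_cases hm : z ∈ A ∧ b ∈ A
    · rw [if_pos hm] at hE; exact absurd rfl hE
    rw [if_neg hm] at hE
    have hadj : G.Adj z b := by
      apply hpadj
      intro h0
      simp [hP_def, h0] at hE
    by_contra hle
    push_neg at hle
    exact hm ⟨hz, hAclosed z hz b hadj hle⟩
  have hNQA : ∀ (k : ℕ) (z : V), NE Q k y z ≠ 0 → z ∈ A := by
    intro k
    induction k with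
    | zero =>
      intro z h
      rcases eq_or_ne y z with rfl | hne
      · exact hyA
      · rw [NE_zero_ne Q hne] at h; exact absurd rfl h
    | succ k ih =>
      intro z h
      rw [NE_succ] at h
      have hex : ∃ b, NE Q k y b * Q b z ≠ 0 := by
        by_contra hall
        push_neg at hall
        exact h (by simp only [ENNReal.tsum_eq_zero]; exact hall)
      obtain ⟨b, hb⟩ := hex
      have hQnz : Q b z ≠ 0 := fun h0 => hb (by rw [h0, mul_zero])
      simp only [hQ_def] at hQnz
      by_cases hm : b ∈ A ∧ z ∈ A
      · exact hm.2
      · rw [if_neg hm] at hQnz; exact absurd rfl hQnz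
  have hNQzero : ∀ n, NE Q n y y' = 0 := by
    intro n
    by_contra h
    exact hy'A (hNQA n y' h)
  -- the bound M for Green's function at far-away points
  set M : ℝ≥0∞ := ENNReal.ofReal (lam y' * (Cg * ((C - 1) * R) ^ (-t))) with hM_def
  have hCR : 0 < (C - 1) * R := by nlinarith
  have hGEwM : ∀ b : V, C * R < d x b → (∑' m, NE P m b y') ≤ M := by
    intro b hb
    have hd1 : (C - 1) * R ≤ d b y' := by
      have h1 := hd_tri x b y'
      have h2 := hd_tri x y' b
      rw [hd_symm b y']
      linarith [hd_symm y' b]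
    have hne : b ≠ y' := by
      intro h
      rw [h, hd_self] at hd1
      nlinarith
    rw [hGE b y', hM_def]
    apply ENNReal.ofReal_le_ofReal
    have hmono : d b y' ^ (-t) ≤ ((C - 1) * R) ^ (-t) :=
      Real.rpow_le_rpow_of_nonpos hCR hd1 (neg_nonpos.mpr ht.le)
    have hgb : green p lam b y' ≤ Cg * ((C - 1) * R) ^ (-t) :=
      le_trans (hGoff b y' hne).2 (mul_le_mul_of_nonneg_left hmono hCgpos.le)
    exact mul_le_mul_of_nonneg_left hgb (hlampos y').le
  -- survival sums
  set S : ℕ → ℝ≥0∞ := fun k => ∑' z, NE Q k y z with hS_def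
  set T : ℕ → ℝ≥0∞ := fun k => ∑' z, ∑' b, NE Q k y z * EK z b with hT_def
  have hS0 : S 0 = 1 := by
    simp only [hS_def]
    calc ∑' z, NE Q 0 y z = ∑' z, NE Q 0 y z * (fun _ => (1:ℝ≥0∞)) z :=
          tsum_congr fun z => (mul_one _).symm
      _ = 1 := NE_zero_mul_tsum Q y _
  have hQErow : ∀ z, (∑' b, Q z b) + (∑' b, EK z b) = 1 := by
    intro z
    rw [← ENNReal.tsum_add]
    rw [tsum_congr (fun b => hQE z b)]
    exact hProw z
  have hTS : ∀ k, T k + S (k+1) ≤ S k := by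
    intro k
    have hSk1 : S (k+1) = ∑' z, NE Q k y z * ∑' b, Q z b := by
      simp only [hS_def]
      calc ∑' b, NE Q (k+1) y b = ∑' b, ∑' z, NE Q k y z * Q z b :=
            tsum_congr fun b => by rw [NE_succ]
        _ = ∑' z, ∑' b, NE Q k y z * Q z b := ENNReal.tsum_comm
        _ = ∑' z, NE Q k y z * ∑' b, Q z b := tsum_congr fun z => ENNReal.tsum_mul_left
    have hTk : T k = ∑' z, NE Q k y z * ∑' b, EK z b :=
      tsum_congr fun z => ENNReal.tsum_mul_left
    rw [hTk, hSk1, ← ENNReal.tsum_add]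
    calc ∑' z, (NE Q k y z * ∑' b, EK z b + NE Q k y z * ∑' b, Q z b)
        = ∑' z, NE Q k y z * ((∑' b, Q z b) + ∑' b, EK z b) :=
          tsum_congr fun z => by rw [← mul_add, add_comm (∑' b, EK z b)]
      _ = ∑' z, NE Q k y z * 1 := tsum_congr fun z => by rw [hQErow z]
      _ = S k := by simp only [hS_def]; exact tsum_congr fun z => mul_one _
      _ ≤ S k := le_rfl
  have hTpartial : ∀ K, (∑ k ∈ Finset.range K, T k) + S K ≤ 1 := by
    intro K
    induction K with
    | zero => simp [hS0]
    | succ K ih =>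
      rw [Finset.sum_range_succ, add_assoc]
      exact le_trans (add_le_add_right (hTS K) _) ih
  have hTsum : ∑' k, T k ≤ 1 := by
    rw [ENNReal.tsum_eq_iSup_sum]
    refine iSup_le fun s => ?_
    obtain ⟨K, hK⟩ := s.exists_nat_subset_range
    calc ∑ k ∈ s, T k ≤ ∑ k ∈ Finset.range K, T k :=
          Finset.sum_le_sum_of_subset hK
      _ ≤ (∑ k ∈ Finset.range K, T k) + S K := le_self_add
      _ ≤ 1 := hTpartial K
  -- main estimate
  have hmain : ∑' n, NE P n y y' ≤ M := by
    calc ∑' n, NE P n y y'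
        ≤ ∑' n, ∑ k ∈ Finset.range n, ∑' z, ∑' b,
            NE Q k y z * (EK z b * NE P (n-1-k) b y') := by
          refine ENNReal.tsum_le_tsum fun n => ?_
          have h1 := NE_decomp P Q EK hQE y' n y
          rwa [hNQzero n, zero_add] at h1
      _ = ∑' k, ∑' m, ∑' z, ∑' b, NE Q k y z * (EK z b * NE P m b y') :=
          tsum_range_reindex (F := fun k m => ∑' z, ∑' b, NE Q k y z * (EK z b * NE P m b y'))
      _ = ∑' k, ∑' z, ∑' b, NE Q k y z * (EK z b * ∑' m, NE P m b y') := by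
          refine tsum_congr fun k => ?_
          calc ∑' m, ∑' z, ∑' b, NE Q k y z * (EK z b * NE P m b y')
              = ∑' z, ∑' m, ∑' b, NE Q k y z * (EK z b * NE P m b y') := ENNReal.tsum_comm
            _ = ∑' z, ∑' b, ∑' m, NE Q k y z * (EK z b * NE P m b y') :=
                tsum_congr fun z => ENNReal.tsum_comm
            _ = ∑' z, ∑' b, NE Q k y z * (EK z b * ∑' m, NE P m b y') := by
                refine tsum_congr fun z => tsum_congr fun b => ?_
                rw [ENNReal.tsum_mul_left, ENNReal.tsum_mul_left]
      _ ≤ ∑' k, ∑' z, ∑' b, NE Q k y z * (EK z b * M) := by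
          refine ENNReal.tsum_le_tsum fun k => ENNReal.tsum_le_tsum fun z =>
            ENNReal.tsum_le_tsum fun b => ?_
          by_cases h1 : NE Q k y z = 0
          · rw [h1]; simp
          by_cases h2 : EK z b = 0
          · rw [h2]; simp
          exact mul_le_mul_right (mul_le_mul_right
            (hGEwM b (hEKfar z b (hNQA k z h1) h2)) _) _
      _ = ∑' k, T k * M := by
          refine tsum_congr fun k => ?_
          simp only [hT_def]
          calc ∑' z, ∑' b, NE Q k y z * (EK z b * M)
              = ∑' z, ∑' b, (NE Q k y z * EK z b) * M :=
                tsum_congr fun z => tsum_congr fun b => (mul_assoc _ _ _).symm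
            _ = ∑' z, (∑' b, NE Q k y z * EK z b) * M :=
                tsum_congr fun z => ENNReal.tsum_mul_right
            _ = (∑' z, ∑' b, NE Q k y z * EK z b) * M := ENNReal.tsum_mul_right
      _ = (∑' k, T k) * M := ENNReal.tsum_mul_right
      _ ≤ 1 * M := mul_le_mul_left hTsum M
      _ = M := one_mul M
  -- lower bound and contradiction
  have hlow : ENNReal.ofReal (lam y' * (cg * (2*R) ^ (-t))) ≤ M := by
    refine le_trans ?_ ((hGE y y') ▸ hmain)
    apply ENNReal.ofReal_le_ofReal
    have hmono : (2*R) ^ (-t) ≤ d y y' ^ (-t) :=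
      Real.rpow_le_rpow_of_nonpos hdyy' hd2R (neg_nonpos.mpr ht.le)
    have hgy : cg * (2*R) ^ (-t) ≤ green p lam y y' :=
      le_trans (mul_le_mul_of_nonneg_left hmono hcg.le) (hGoff y y' hyy').1
    exact mul_le_mul_of_nonneg_left hgy (hlampos y').le
  rw [hM_def] at hlow
  have hM0 : 0 ≤ lam y' * (Cg * ((C-1)*R) ^ (-t)) :=
    mul_nonneg (hlampos y').le (mul_nonneg hCgpos.le (Real.rpow_pos_of_pos hCR (-t)).le)
  have hreal := (ENNReal.ofReal_le_ofReal_iff hM0).mp hlow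
  have hgreen : cg * (2*R) ^ (-t) ≤ Cg * ((C-1)*R) ^ (-t) :=
    le_of_mul_le_mul_left hreal (hlampos y')
  -- numeric contradiction
  have hfinal : Cg * ((C-1)*R) ^ (-t) < cg * (2*R) ^ (-t) := by
    rw [Real.rpow_neg hCR.le, Real.rpow_neg (by positivity : (0:ℝ) ≤ 2*R),
      ← div_eq_mul_inv, ← div_eq_mul_inv]
    rw [div_lt_div_iff₀ (Real.rpow_pos_of_pos hCR t) (Real.rpow_pos_of_pos (by positivity) t)]
    rw [Real.mul_rpow (by norm_num : (0:ℝ) ≤ 2) hR0.le,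
      Real.mul_rpow (by nlinarith : (0:ℝ) ≤ C - 1) hR0.le]
    have hRt : 0 < R ^ t := Real.rpow_pos_of_pos hR0 t
    have hkey : Cg * 2^t < cg * (C-1)^t := by
      have h2u : ((2*u) : ℝ)^t < (C-1)^t :=
        Real.rpow_lt_rpow (by positivity) (by simp only [hC_def]; linarith) ht
      have hut : u ^ t = Cg / cg := by
        rw [hu_def, ← Real.rpow_mul (by positivity : (0:ℝ) ≤ Cg / cg),
          one_div_mul_cancel ht.ne', Real.rpow_one]
      have h2ut : ((2*u) : ℝ)^t = 2^t * (Cg/cg) := by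
        rw [Real.mul_rpow (by norm_num) (by positivity), hut]
      calc Cg * 2^t = cg * (2^t * (Cg/cg)) := by field_simp
        _ = cg * (2*u)^t := by rw [h2ut]
        _ < cg * (C-1)^t := mul_lt_mul_of_pos_left h2u hcg
    calc Cg * (2^t * R^t) = (Cg * 2^t) * R^t := by ring
      _ < (cg * (C-1)^t) * R^t := mul_lt_mul_of_pos_right hkey hRt
      _ = cg * ((C-1)^t * R^t) := by ring
  linarith
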